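/- Let f₁, f₂ : ℝ → ℝ be smooth functions with f₁(0) = f₂(0). For ε > 0 define the cubic polynomial f̃_ε(t) = ((t+ε)/(2ε))·f₂(ε) − ((t−ε)/(2ε))·f₁(−ε) + ((t−ε)²·(t+ε)/(4ε²))·[f₁'(−ε) − (f₂(ε) − f₁(−ε))/(2ε)] + ((t+ε)²·(t−ε)/(4ε²))·[f₂'(ε) − (f₂(ε) − f₁(−ε))/(2ε)]. Then: (i) f̃_ε(−ε) = f₁(−ε), f̃_ε(ε) = f₂(ε), f̃_ε'(−ε) = f₁'(−ε) and f̃_ε'(ε) = f₂'(ε); (ii) there exist C > 0 and ε₀ > 0 such that |f̃_ε'(t)| ≤ C for all ε ∈ (0, ε₀) and all t ∈ [−ε, ε]; and (iii) both ε·f̃_ε''(ε) and ε·f̃_ε''(−ε) converge to (1/2)·(f₂'(0) − f₁'(0)) as ε → 0⁺. -/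

import Mathlib

open Filter

private lemma cubic_hasDerivAt (ε A B D1 D2 t : ℝ) :
    HasDerivAt (fun t : ℝ =>
      ((t + ε) / (2 * ε)) * A - ((t - ε) / (2 * ε)) * B
      + ((t - ε) ^ 2 * (t + ε) / (4 * ε ^ 2)) * D1
      + ((t + ε) ^ 2 * (t - ε) / (4 * ε ^ 2)) * D2)
    ((A - B) / (2 * ε)
      + (3 * t ^ 2 - 2 * ε * t - ε ^ 2) / (4 * ε ^ 2) * D1
      + (3 * t ^ 2 + 2 * ε * t - ε ^ 2) / (4 * ε ^ 2) * D2) t := by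
  have h1 : HasDerivAt (fun t : ℝ => ((t + ε) / (2 * ε)) * A) (1 / (2 * ε) * A) t :=
    (((hasDerivAt_id' t).add_const ε).div_const (2 * ε)).mul_const A
  have h2 : HasDerivAt (fun t : ℝ => ((t - ε) / (2 * ε)) * B) (1 / (2 * ε) * B) t :=
    (((hasDerivAt_id' t).sub_const ε).div_const (2 * ε)).mul_const B
  have h3 : HasDerivAt (fun t : ℝ => ((t - ε) ^ 2 * (t + ε) / (4 * ε ^ 2)) * D1)
      (((2 * (t - ε) ^ 1 * 1) * (t + ε) + (t - ε) ^ 2 * 1) / (4 * ε ^ 2) * D1) t :=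
    (((((hasDerivAt_id' t).sub_const ε).pow 2).mul
      ((hasDerivAt_id' t).add_const ε)).div_const (4 * ε ^ 2)).mul_const D1
  have h4 : HasDerivAt (fun t : ℝ => ((t + ε) ^ 2 * (t - ε) / (4 * ε ^ 2)) * D2)
      (((2 * (t + ε) ^ 1 * 1) * (t - ε) + (t + ε) ^ 2 * 1) / (4 * ε ^ 2) * D2) t :=
    (((((hasDerivAt_id' t).add_const ε).pow 2).mul
      ((hasDerivAt_id' t).sub_const ε)).div_const (4 * ε ^ 2)).mul_const D2
  have H := ((h1.sub h2).add h3).add h4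
  exact H.congr_deriv (by ring)

private lemma cubicd_hasDerivAt (ε Q D1 D2 t : ℝ) :
    HasDerivAt (fun t : ℝ => Q
      + (3 * t ^ 2 - 2 * ε * t - ε ^ 2) / (4 * ε ^ 2) * D1
      + (3 * t ^ 2 + 2 * ε * t - ε ^ 2) / (4 * ε ^ 2) * D2)
    ((6 * t - 2 * ε) / (4 * ε ^ 2) * D1 + (6 * t + 2 * ε) / (4 * ε ^ 2) * D2) t := by
  have p1 : HasDerivAt (fun t : ℝ => 3 * t ^ 2 - 2 * ε * t - ε ^ 2) (6 * t - 2 * ε) t := by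
    have := (((hasDerivAt_pow 2 t).const_mul 3).sub
      ((hasDerivAt_id' t).const_mul (2 * ε))).sub_const (ε ^ 2)
    exact this.congr_deriv (by push_cast; ring)
  have p2 : HasDerivAt (fun t : ℝ => 3 * t ^ 2 + 2 * ε * t - ε ^ 2) (6 * t + 2 * ε) t := by
    have := (((hasDerivAt_pow 2 t).const_mul 3).add
      ((hasDerivAt_id' t).const_mul (2 * ε))).sub_const (ε ^ 2)
    exact this.congr_deriv (by push_cast; ring)
  have H := (((hasDerivAt_const t Q).add
    ((p1.div_const (4 * ε ^ 2)).mul_const D1)).add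
    ((p2.div_const (4 * ε ^ 2)).mul_const D2))
  exact H.congr_deriv (by ring)

set_option maxHeartbeats 2000000 in
/-- the cubic spline interpolation `f̃_ε` between `f₁` on `[-ε, 0]` and `f₂`
on `[0, ε]`: it forms a C¹ join at `±ε`, its first derivative is uniformly bounded for
small `ε`, and `ε·f̃_ε''(±ε) → (f₂'(0) - f₁'(0))/2` as `ε → 0⁺`. -/
theorem cubic_spline_interpolation (f₁ f₂ : ℝ → ℝ)
    (hf₁ : ContDiff ℝ (⊤ : ℕ∞) f₁) (hf₂ : ContDiff ℝ (⊤ : ℕ∞) f₂)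
    (h0 : f₁ 0 = f₂ 0)
    (F : ℝ → ℝ → ℝ)
    (hF : ∀ ε t, F ε t =
      ((t + ε) / (2 * ε)) * f₂ ε - ((t - ε) / (2 * ε)) * f₁ (-ε)
      + ((t - ε) ^ 2 * (t + ε) / (4 * ε ^ 2)) *
          (deriv f₁ (-ε) - (f₂ ε - f₁ (-ε)) / (2 * ε))
      + ((t + ε) ^ 2 * (t - ε) / (4 * ε ^ 2)) *
          (deriv f₂ ε - (f₂ ε - f₁ (-ε)) / (2 * ε))) :
    (∀ ε : ℝ, 0 < ε →
      F ε (-ε) = f₁ (-ε) ∧ F ε ε = f₂ ε ∧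
      deriv (F ε) (-ε) = deriv f₁ (-ε) ∧ deriv (F ε) ε = deriv f₂ ε) ∧
    (∃ C : ℝ, 0 < C ∧ ∃ ε₀ : ℝ, 0 < ε₀ ∧
      ∀ ε ∈ Set.Ioo 0 ε₀, ∀ t ∈ Set.Icc (-ε) ε, |deriv (F ε) t| ≤ C) ∧
    Tendsto (fun ε => ε * deriv (deriv (F ε)) ε) (nhdsWithin 0 (Set.Ioi 0))
      (nhds ((deriv f₂ 0 - deriv f₁ 0) / 2)) ∧
    Tendsto (fun ε => ε * deriv (deriv (F ε)) (-ε)) (nhdsWithin 0 (Set.Ioi 0))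
      (nhds ((deriv f₂ 0 - deriv f₁ 0) / 2)) := by
  have hf₁d : Differentiable ℝ f₁ := hf₁.differentiable (by simp)
  have hf₂d : Differentiable ℝ f₂ := hf₂.differentiable (by simp)
  have hc₁ : Continuous (deriv f₁) := hf₁.continuous_deriv (by exact_mod_cast le_top)
  have hc₂ : Continuous (deriv f₂) := hf₂.continuous_deriv (by exact_mod_cast le_top)
  -- the first derivative of `F ε`
  have hderiv1 : ∀ ε t : ℝ, deriv (F ε) t =
      (f₂ ε - f₁ (-ε)) / (2 * ε)
      + (3 * t ^ 2 - 2 * ε * t - ε ^ 2) / (4 * ε ^ 2) *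
          (deriv f₁ (-ε) - (f₂ ε - f₁ (-ε)) / (2 * ε))
      + (3 * t ^ 2 + 2 * ε * t - ε ^ 2) / (4 * ε ^ 2) *
          (deriv f₂ ε - (f₂ ε - f₁ (-ε)) / (2 * ε)) := by
    intro ε t
    have hFe : F ε = fun t : ℝ =>
        ((t + ε) / (2 * ε)) * f₂ ε - ((t - ε) / (2 * ε)) * f₁ (-ε)
        + ((t - ε) ^ 2 * (t + ε) / (4 * ε ^ 2)) *
            (deriv f₁ (-ε) - (f₂ ε - f₁ (-ε)) / (2 * ε))
        + ((t + ε) ^ 2 * (t - ε) / (4 * ε ^ 2)) *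
            (deriv f₂ ε - (f₂ ε - f₁ (-ε)) / (2 * ε)) := funext fun t => hF ε t
    rw [hFe]
    exact (cubic_hasDerivAt ε (f₂ ε) (f₁ (-ε)) _ _ t).deriv
  -- the second derivative of `F ε`
  have hderiv2 : ∀ ε t : ℝ, deriv (deriv (F ε)) t =
      (6 * t - 2 * ε) / (4 * ε ^ 2) * (deriv f₁ (-ε) - (f₂ ε - f₁ (-ε)) / (2 * ε))
      + (6 * t + 2 * ε) / (4 * ε ^ 2) * (deriv f₂ ε - (f₂ ε - f₁ (-ε)) / (2 * ε)) := by
    intro ε t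
    have hd : deriv (F ε) = fun t : ℝ =>
        (f₂ ε - f₁ (-ε)) / (2 * ε)
        + (3 * t ^ 2 - 2 * ε * t - ε ^ 2) / (4 * ε ^ 2) *
            (deriv f₁ (-ε) - (f₂ ε - f₁ (-ε)) / (2 * ε))
        + (3 * t ^ 2 + 2 * ε * t - ε ^ 2) / (4 * ε ^ 2) *
            (deriv f₂ ε - (f₂ ε - f₁ (-ε)) / (2 * ε)) := funext fun t => hderiv1 ε t
    rw [hd]
    exact (cubicd_hasDerivAt ε _ _ _ t).deriv
  -- the limit of the difference quotient
  have hQlim : Tendsto (fun ε : ℝ => (f₂ ε - f₁ (-ε)) / (2 * ε)) (nhdsWithin 0 (Set.Ioi 0))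
      (nhds ((deriv f₂ 0 + deriv f₁ 0) / 2)) := by
    have h2 : Tendsto (slope f₂ 0) (nhdsWithin 0 {(0:ℝ)}ᶜ) (nhds (deriv f₂ 0)) :=
      hasDerivAt_iff_tendsto_slope.mp (hf₂d 0).hasDerivAt
    have h1 : Tendsto (slope f₁ 0) (nhdsWithin 0 {(0:ℝ)}ᶜ) (nhds (deriv f₁ 0)) :=
      hasDerivAt_iff_tendsto_slope.mp (hf₁d 0).hasDerivAt
    have ha : Tendsto (fun ε : ℝ => slope f₂ 0 ε) (nhdsWithin 0 (Set.Ioi 0))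
        (nhds (deriv f₂ 0)) :=
      h2.mono_left (nhdsWithin_mono 0 (fun x hx => ne_of_gt hx))
    have hneg : Tendsto (fun ε : ℝ => -ε) (nhdsWithin (0:ℝ) (Set.Ioi 0))
        (nhdsWithin (0:ℝ) {(0:ℝ)}ᶜ) := by
      rw [tendsto_nhdsWithin_iff]
      constructor
      · simpa using (continuous_neg.tendsto (0:ℝ)).mono_left nhdsWithin_le_nhds
      · filter_upwards [self_mem_nhdsWithin] with x hx
        exact neg_ne_zero.mpr (ne_of_gt hx)
    have hb : Tendsto (fun ε : ℝ => slope f₁ 0 (-ε)) (nhdsWithin 0 (Set.Ioi 0))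
        (nhds (deriv f₁ 0)) := h1.comp hneg
    have hcomb := (ha.add hb).div_const 2
    refine Tendsto.congr' ?_ hcomb
    filter_upwards [self_mem_nhdsWithin] with ε hε
    have hε0 : (ε : ℝ) ≠ 0 := ne_of_gt hε
    rw [slope_def_field, slope_def_field, h0]
    simp only [sub_zero, div_neg, ← sub_eq_add_neg, div_sub_div_same, div_div]
    ring
  have hd₁lim : Tendsto (fun ε : ℝ => deriv f₁ (-ε)) (nhdsWithin 0 (Set.Ioi 0))
      (nhds (deriv f₁ 0)) := by
    have h := ((hc₁.comp continuous_neg).tendsto (0:ℝ)).mono_left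
      (nhdsWithin_le_nhds (s := Set.Ioi (0:ℝ)))
    simpa [Function.comp_def] using h
  have hd₂lim : Tendsto (fun ε : ℝ => deriv f₂ ε) (nhdsWithin 0 (Set.Ioi 0))
      (nhds (deriv f₂ 0)) := (hc₂.tendsto 0).mono_left nhdsWithin_le_nhds
  refine ⟨?_, ?_, ?_, ?_⟩
  · -- (i) C¹ join
    intro ε hε
    have hε0 : (ε : ℝ) ≠ 0 := ne_of_gt hε
    refine ⟨?_, ?_, ?_, ?_⟩
    · rw [hF]; field_simp; ring
    · rw [hF]; field_simp; ring
    · rw [hderiv1]; field_simp; ring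
    · rw [hderiv1]; field_simp; ring
  · -- (ii) uniform bound
    obtain ⟨M₁, hM₁⟩ := (isCompact_Icc (a := (-1:ℝ)) (b := 1)).exists_bound_of_continuousOn
      hc₁.continuousOn
    obtain ⟨M₂, hM₂⟩ := (isCompact_Icc (a := (-1:ℝ)) (b := 1)).exists_bound_of_continuousOn
      hc₂.continuousOn
    set M : ℝ := max M₁ M₂ + 1 with hMdef
    have hM₁0 : 0 ≤ M₁ := le_trans (norm_nonneg _) (hM₁ 0 (by norm_num))
    have hM : 0 < M := by positivity
    have hM₁M : M₁ ≤ M := by simp only [hMdef]; nlinarith [le_max_left M₁ M₂]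
    have hM₂M : M₂ ≤ M := by simp only [hMdef]; nlinarith [le_max_right M₁ M₂]
    refine ⟨7 * M, by positivity, 1, one_pos, ?_⟩
    rintro ε ⟨hε0, hε1⟩ t ⟨ht1, ht2⟩
    have hεne : (ε : ℝ) ≠ 0 := ne_of_gt hε0
    have hmemε : ε ∈ Set.Icc (-1 : ℝ) 1 := ⟨by linarith, le_of_lt hε1⟩
    have hmemnε : -ε ∈ Set.Icc (-1 : ℝ) 1 := ⟨by linarith, by linarith⟩
    have hmem0 : (0:ℝ) ∈ Set.Icc (-1 : ℝ) 1 := by norm_num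
    -- bound on the difference quotient
    have hb2 : ‖f₂ ε - f₂ 0‖ ≤ M * ‖ε - 0‖ :=
      (convex_Icc (-1:ℝ) 1).norm_image_sub_le_of_norm_deriv_le
        (fun x _ => hf₂d x) (fun x hx => le_trans (hM₂ x hx) hM₂M) hmem0 hmemε
    have hb1 : ‖f₁ 0 - f₁ (-ε)‖ ≤ M * ‖0 - (-ε)‖ :=
      (convex_Icc (-1:ℝ) 1).norm_image_sub_le_of_norm_deriv_le
        (fun x _ => hf₁d x) (fun x hx => le_trans (hM₁ x hx) hM₁M) hmemnε hmem0
    have hb2' : |f₂ ε - f₂ 0| ≤ M * ε := by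
      simpa [Real.norm_eq_abs, abs_of_pos hε0] using hb2
    have hb1' : |f₁ 0 - f₁ (-ε)| ≤ M * ε := by
      simpa [Real.norm_eq_abs, abs_of_pos hε0] using hb1
    have hQ : |(f₂ ε - f₁ (-ε)) / (2 * ε)| ≤ M := by
      rw [abs_div, abs_of_pos (by linarith : (0:ℝ) < 2 * ε), div_le_iff₀ (by linarith)]
      have : |f₂ ε - f₁ (-ε)| ≤ |f₂ ε - f₂ 0| + |f₁ 0 - f₁ (-ε)| := by
        have : f₂ ε - f₁ (-ε) = (f₂ ε - f₂ 0) + (f₁ 0 - f₁ (-ε)) := by rw [h0]; ring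
        rw [this]; exact abs_add_le _ _
      nlinarith
    have hD1 : |deriv f₁ (-ε) - (f₂ ε - f₁ (-ε)) / (2 * ε)| ≤ 2 * M := by
      have := hM₁ (-ε) hmemnε
      rw [Real.norm_eq_abs] at this
      calc |deriv f₁ (-ε) - (f₂ ε - f₁ (-ε)) / (2 * ε)|
          ≤ |deriv f₁ (-ε)| + |(f₂ ε - f₁ (-ε)) / (2 * ε)| := abs_sub _ _
        _ ≤ 2 * M := by linarith
    have hD2 : |deriv f₂ ε - (f₂ ε - f₁ (-ε)) / (2 * ε)| ≤ 2 * M := by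
      have := hM₂ ε hmemε
      rw [Real.norm_eq_abs] at this
      calc |deriv f₂ ε - (f₂ ε - f₁ (-ε)) / (2 * ε)|
          ≤ |deriv f₂ ε| + |(f₂ ε - f₁ (-ε)) / (2 * ε)| := abs_sub _ _
        _ ≤ 2 * M := by linarith
    have hts : t ^ 2 ≤ ε ^ 2 := by nlinarith
    have het : ε * t ≤ ε ^ 2 := by nlinarith
    have het2 : -(ε ^ 2) ≤ ε * t := by nlinarith
    have htq : 0 ≤ t ^ 2 := sq_nonneg t
    have heq : 0 ≤ ε ^ 2 := sq_nonneg ε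
    have hc1 : |(3 * t ^ 2 - 2 * ε * t - ε ^ 2) / (4 * ε ^ 2)| ≤ 3 / 2 := by
      rw [abs_div, abs_of_pos (by positivity : (0:ℝ) < 4 * ε ^ 2),
        div_le_iff₀ (by positivity)]
      rw [abs_le]
      constructor <;> linarith
    have hc2 : |(3 * t ^ 2 + 2 * ε * t - ε ^ 2) / (4 * ε ^ 2)| ≤ 3 / 2 := by
      rw [abs_div, abs_of_pos (by positivity : (0:ℝ) < 4 * ε ^ 2),
        div_le_iff₀ (by positivity)]
      rw [abs_le]
      constructor <;> linarith
    rw [hderiv1]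
    calc |(f₂ ε - f₁ (-ε)) / (2 * ε)
        + (3 * t ^ 2 - 2 * ε * t - ε ^ 2) / (4 * ε ^ 2) *
            (deriv f₁ (-ε) - (f₂ ε - f₁ (-ε)) / (2 * ε))
        + (3 * t ^ 2 + 2 * ε * t - ε ^ 2) / (4 * ε ^ 2) *
            (deriv f₂ ε - (f₂ ε - f₁ (-ε)) / (2 * ε))|
        ≤ |(f₂ ε - f₁ (-ε)) / (2 * ε)|
          + |(3 * t ^ 2 - 2 * ε * t - ε ^ 2) / (4 * ε ^ 2) *
              (deriv f₁ (-ε) - (f₂ ε - f₁ (-ε)) / (2 * ε))|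
          + |(3 * t ^ 2 + 2 * ε * t - ε ^ 2) / (4 * ε ^ 2) *
              (deriv f₂ ε - (f₂ ε - f₁ (-ε)) / (2 * ε))| := abs_add_three _ _ _
      _ ≤ M + (3 / 2) * (2 * M) + (3 / 2) * (2 * M) := by
          rw [abs_mul, abs_mul]
          gcongr
      _ = 7 * M := by ring
  · -- (iii) at ε
    have key : ∀ ε : ℝ, 0 < ε → ε * deriv (deriv (F ε)) ε =
        deriv f₁ (-ε) + 2 * deriv f₂ ε - 3 * ((f₂ ε - f₁ (-ε)) / (2 * ε)) := by
      intro ε hε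
      have hε0 : (ε : ℝ) ≠ 0 := ne_of_gt hε
      rw [hderiv2]
      field_simp
      ring
    have L1 := (hd₁lim.add (hd₂lim.const_mul 2)).sub (hQlim.const_mul 3)
    have e1 : deriv f₁ 0 + 2 * deriv f₂ 0 - 3 * ((deriv f₂ 0 + deriv f₁ 0) / 2)
        = (deriv f₂ 0 - deriv f₁ 0) / 2 := by ring
    rw [e1] at L1
    refine Tendsto.congr' ?_ L1
    filter_upwards [self_mem_nhdsWithin] with ε hε
    exact (key ε hε).symm
  · -- (iii) at -ε
    have key : ∀ ε : ℝ, 0 < ε → ε * deriv (deriv (F ε)) (-ε) =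
        -(2 * deriv f₁ (-ε)) - deriv f₂ ε + 3 * ((f₂ ε - f₁ (-ε)) / (2 * ε)) := by
      intro ε hε
      have hε0 : (ε : ℝ) ≠ 0 := ne_of_gt hε
      rw [hderiv2]
      field_simp
      ring
    have L1 := (((hd₁lim.const_mul 2).neg.sub hd₂lim).add (hQlim.const_mul 3))
    have e1 : -(2 * deriv f₁ 0) - deriv f₂ 0 + 3 * ((deriv f₂ 0 + deriv f₁ 0) / 2)
        = (deriv f₂ 0 - deriv f₁ 0) / 2 := by ring
    rw [e1] at L1
    refine Tendsto.congr' ?_ L1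
    filter_upwards [self_mem_nhdsWithin] with ε hε
    exact (key ε hε).symm
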